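/- In the setting of the estimated Perron–Frobenius operator on an RKHM over ℂ^{m×m}: suppose the complex kernel k̃ is continuous, Y is dense in X^m, the exact Gram–Schmidt (ε = 0) orthonormal system {q_t}_{t=0}^∞ is built from {φ(x_t)}_{x_t ∈ Y}, and the Perron–Frobenius operator K is a bounded ℂ^{m×m}-linear map on M_k. Then the orthonormal system {q_t} is an orthonormal basis of M_k, and the compressions Q_T Q_T* K Q_T Q_T* converge strongly to K as T → ∞; that is, for every v ∈ M_k, ‖K v − Q_T Q_T* K Q_T Q_T* v‖_k → 0. -/

import Mathlib

open scoped Matrix.Norms.L2Operator ComplexOrder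

/-- A Hilbert C*-module over the C*-algebra `ℂ^{m×m}` of `m × m` complex matrices (with the
operator norm): a right module with a matrix-valued inner product inducing the norm of `M`. -/
structure HilbertModuleMat (m : ℕ) (M : Type*) [NormedAddCommGroup M] where
  smul : M → Matrix (Fin m) (Fin m) ℂ → M
  inner : M → M → Matrix (Fin m) (Fin m) ℂ
  smul_add_vec : ∀ (u v : M) c, smul (u + v) c = smul u c + smul v c
  smul_add_alg : ∀ (u : M) c d, smul u (c + d) = smul u c + smul u d
  smul_mul : ∀ (u : M) c d, smul u (c * d) = smul (smul u c) d
  smul_one : ∀ u : M, smul u 1 = u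
  inner_add_right : ∀ u v w : M, inner u (v + w) = inner u v + inner u w
  inner_smul_right : ∀ (u v : M) c, inner u (smul v c) = inner u v * c
  inner_conj : ∀ u v : M, inner v u = star (inner u v)
  inner_self_posSemidef : ∀ u : M, (inner u u).PosSemidef
  inner_definite : ∀ u : M, inner u u = 0 → u = 0
  norm_eq : ∀ u : M, ‖u‖ = Real.sqrt ‖inner u u‖

/-- A vector `q` is *normalized* if `⟨q,q⟩` is a nonzero idempotent. -/
def HilbertModuleMat.Normalized {m : ℕ} {M : Type*} [NormedAddCommGroup M]
    (h : HilbertModuleMat m M) (q : M) : Prop :=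
  h.inner q q ≠ 0 ∧ h.inner q q * h.inner q q = h.inner q q

open Matrix

open scoped MatrixOrder in
lemma norm_posSemidef_le_norm_add {m : ℕ} {A B : Matrix (Fin m) (Fin m) ℂ}
    (hA : A.PosSemidef) (hB : B.PosSemidef) : ‖A‖ ≤ ‖A + B‖ := by
  refine CStarAlgebra.norm_le_norm_of_nonneg_of_le hA.nonneg ?_
  rw [Matrix.le_iff, add_sub_cancel_left]
  exact hB

namespace HilbertModuleMat

variable {m : ℕ} {M : Type*} [NormedAddCommGroup M] (h : HilbertModuleMat m M)

lemma smul_zero' (u : M) : h.smul u 0 = 0 := by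
  have h0 := h.smul_add_alg u 0 0
  rw [add_zero] at h0
  exact (left_eq_add.mp h0)

lemma zero_smul' (c : Matrix (Fin m) (Fin m) ℂ) : h.smul 0 c = 0 := by
  have h0 := h.smul_add_vec 0 0 c
  rw [add_zero] at h0
  exact (left_eq_add.mp h0)

lemma smul_neg_vec (u : M) (c : Matrix (Fin m) (Fin m) ℂ) :
    h.smul (-u) c = -(h.smul u c) := by
  have h0 := h.smul_add_vec u (-u) c
  rw [add_neg_cancel, h.zero_smul'] at h0
  exact (neg_eq_of_add_eq_zero_right h0.symm).symm

lemma smul_sub_vec (u v : M) (c : Matrix (Fin m) (Fin m) ℂ) :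
    h.smul (u - v) c = h.smul u c - h.smul v c := by
  rw [sub_eq_add_neg, h.smul_add_vec, h.smul_neg_vec, sub_eq_add_neg]

lemma smul_neg_alg (u : M) (c : Matrix (Fin m) (Fin m) ℂ) :
    h.smul u (-c) = -(h.smul u c) := by
  have h0 := h.smul_add_alg u c (-c)
  rw [add_neg_cancel, h.smul_zero'] at h0
  exact (neg_eq_of_add_eq_zero_right h0.symm).symm

lemma smul_sub_alg (u : M) (c d : Matrix (Fin m) (Fin m) ℂ) :
    h.smul u (c - d) = h.smul u c - h.smul u d := by
  rw [sub_eq_add_neg, h.smul_add_alg, h.smul_neg_alg, sub_eq_add_neg]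

lemma inner_zero_right (u : M) : h.inner u 0 = 0 := by
  have h0 := h.inner_add_right u 0 0
  rw [add_zero] at h0
  exact (left_eq_add.mp h0)

lemma inner_zero_left (u : M) : h.inner 0 u = 0 := by
  rw [h.inner_conj, h.inner_zero_right, star_zero]

lemma inner_neg_right (u v : M) : h.inner u (-v) = -(h.inner u v) := by
  have h0 := h.inner_add_right u v (-v)
  rw [add_neg_cancel, h.inner_zero_right] at h0
  exact (neg_eq_of_add_eq_zero_right h0.symm).symm

lemma inner_sub_right (u v w : M) : h.inner u (v - w) = h.inner u v - h.inner u w := by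
  rw [sub_eq_add_neg, h.inner_add_right, h.inner_neg_right, sub_eq_add_neg]

lemma inner_add_left (u v w : M) : h.inner (u + v) w = h.inner u w + h.inner v w := by
  rw [h.inner_conj, h.inner_add_right, star_add, ← h.inner_conj, ← h.inner_conj]

lemma inner_sub_left (u v w : M) : h.inner (u - v) w = h.inner u w - h.inner v w := by
  rw [h.inner_conj, h.inner_sub_right, star_sub, ← h.inner_conj, ← h.inner_conj]

lemma inner_smul_left (u v : M) (c : Matrix (Fin m) (Fin m) ℂ) :
    h.inner (h.smul u c) v = star c * h.inner u v := by
  rw [h.inner_conj, h.inner_smul_right, StarMul.star_mul, ← h.inner_conj]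

lemma inner_sum_right {ι : Type*} (u : M) (s : Finset ι) (f : ι → M) :
    h.inner u (∑ t ∈ s, f t) = ∑ t ∈ s, h.inner u (f t) := by
  classical
  induction s using Finset.induction_on with
  | empty => simp [h.inner_zero_right]
  | insert _ _ hx ih =>
      rw [Finset.sum_insert hx, Finset.sum_insert hx, h.inner_add_right, ih]

lemma smul_sum {ι : Type*} (s : Finset ι) (f : ι → M) (c : Matrix (Fin m) (Fin m) ℂ) :
    h.smul (∑ t ∈ s, f t) c = ∑ t ∈ s, h.smul (f t) c := by
  classical
  induction s using Finset.induction_on with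
  | empty => simp [h.zero_smul']
  | insert _ _ hx ih =>
      rw [Finset.sum_insert hx, Finset.sum_insert hx, h.smul_add_vec, ih]

lemma norm_sq (u : M) : ‖u‖ ^ 2 = ‖h.inner u u‖ := by
  rw [h.norm_eq, Real.sq_sqrt (norm_nonneg _)]

lemma inner_self_star (u : M) : star (h.inner u u) = h.inner u u := by
  have := (h.inner_self_posSemidef u).isHermitian.eq
  rwa [← Matrix.star_eq_conjTranspose] at this

lemma norm_smul_le (u : M) (c : Matrix (Fin m) (Fin m) ℂ) :
    ‖h.smul u c‖ ≤ ‖u‖ * ‖c‖ := by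
  have h1 : h.inner (h.smul u c) (h.smul u c) = star c * h.inner u u * c := by
    rw [h.inner_smul_right, h.inner_smul_left, mul_assoc]
  have h2 : ‖h.inner (h.smul u c) (h.smul u c)‖ ≤ ‖h.inner u u‖ * ‖c‖ ^ 2 := by
    rw [h1]
    calc ‖star c * h.inner u u * c‖ ≤ ‖star c * h.inner u u‖ * ‖c‖ := norm_mul_le _ _
      _ ≤ ‖star c‖ * ‖h.inner u u‖ * ‖c‖ :=
          mul_le_mul_of_nonneg_right (norm_mul_le _ _) (norm_nonneg _)
      _ = ‖h.inner u u‖ * ‖c‖ ^ 2 := by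
          have : ‖(star c : Matrix (Fin m) (Fin m) ℂ)‖ = ‖c‖ := by
            rw [Matrix.star_eq_conjTranspose, Matrix.l2_opNorm_conjTranspose]
          rw [this]; ring
  rw [h.norm_eq]
  calc Real.sqrt ‖h.inner (h.smul u c) (h.smul u c)‖
      ≤ Real.sqrt (‖h.inner u u‖ * ‖c‖ ^ 2) := Real.sqrt_le_sqrt h2
    _ = ‖u‖ * ‖c‖ := by
        rw [Real.sqrt_mul (norm_nonneg _), Real.sqrt_sq (norm_nonneg _), ← h.norm_eq]

lemma norm_le_norm_add_of_inner_eq_zero (u v : M) (huv : h.inner u v = 0) :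
    ‖u‖ ≤ ‖u + v‖ := by
  have hvu : h.inner v u = 0 := by rw [h.inner_conj, huv, star_zero]
  have h1 : h.inner (u + v) (u + v) = h.inner u u + h.inner v v := by
    rw [h.inner_add_right, h.inner_add_left, h.inner_add_left, huv, hvu]
    abel
  rw [h.norm_eq, h.norm_eq, h1]
  exact Real.sqrt_le_sqrt (norm_posSemidef_le_norm_add
    (h.inner_self_posSemidef u) (h.inner_self_posSemidef v))

end HilbertModuleMat

namespace HilbertModuleMat

variable {m : ℕ} {M : Type*} [NormedAddCommGroup M] (h : HilbertModuleMat m M)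

lemma inner_sum_left {ι : Type*} (s : Finset ι) (f : ι → M) (u : M) :
    h.inner (∑ t ∈ s, f t) u = ∑ t ∈ s, h.inner (f t) u := by
  rw [h.inner_conj, h.inner_sum_right]
  rw [show star (∑ t ∈ s, h.inner u (f t)) = ∑ t ∈ s, star (h.inner u (f t)) by
    exact star_sum s _]
  exact Finset.sum_congr rfl fun t _ => (h.inner_conj _ _).symm

variable (q : ℕ → M)

/-- The projection `Q_T Q_T^*`. -/
def proj (T : ℕ) (v : M) : M :=
  ∑ t ∈ Finset.range T, h.smul (q t) (h.inner (q t) v)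

lemma qfix (hnorm : ∀ t, q t = 0 ∨ h.Normalized (q t)) (t : ℕ) : h.smul (q t) (h.inner (q t) (q t)) = q t := by
  rcases hnorm t with h0 | ⟨_, hid⟩
  · rw [h0, h.zero_smul']
  · have hstar : star (h.inner (q t) (q t)) = h.inner (q t) (q t) := h.inner_self_star _
    have hd : h.inner (q t - h.smul (q t) (h.inner (q t) (q t)))
        (q t - h.smul (q t) (h.inner (q t) (q t))) = 0 := by
      rw [h.inner_sub_right, h.inner_sub_left, h.inner_sub_left, h.inner_smul_right,
        h.inner_smul_left, h.inner_smul_left, h.inner_smul_right, hstar]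
      simp only [hid]
      abel
    have := h.inner_definite _ hd
    rw [sub_eq_zero] at this
    exact this.symm

lemma qabsorb (hnorm : ∀ t, q t = 0 ∨ h.Normalized (q t)) (t : ℕ) (v : M) :
    h.inner (q t) (q t) * h.inner (q t) v = h.inner (q t) v := by
  conv_rhs => rw [← qfix h q hnorm t]
  rw [h.inner_smul_left, h.inner_self_star]

lemma inner_q_proj (horth : ∀ s t, s ≠ t → h.inner (q s) (q t) = 0)
    (hnorm : ∀ t, q t = 0 ∨ h.Normalized (q t)) (v : M) (T t : ℕ) (ht : t < T) :
    h.inner (q t) (v - proj h q T v) = 0 := by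
  rw [h.inner_sub_right, proj, h.inner_sum_right]
  rw [Finset.sum_eq_single t
    (fun s _ hst => by rw [h.inner_smul_right, horth t s (Ne.symm hst), zero_mul])
    (fun hT => absurd (Finset.mem_range.mpr ht) hT)]
  rw [h.inner_smul_right, qabsorb h q hnorm, sub_self]

lemma inner_span_orth (s : Finset ℕ) (c : ℕ → Matrix (Fin m) (Fin m) ℂ) (d : M)
    (hd : ∀ t ∈ s, h.inner (q t) d = 0) :
    h.inner (∑ t ∈ s, h.smul (q t) (c t)) d = 0 := by
  rw [inner_sum_left]
  refine Finset.sum_eq_zero fun t ht => ?_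
  rw [h.inner_smul_left, hd t ht, mul_zero]

lemma bestapprox (horth : ∀ s t, s ≠ t → h.inner (q s) (q t) = 0)
    (hnorm : ∀ t, q t = 0 ∨ h.Normalized (q t)) (v : M) (T : ℕ) (c : ℕ → Matrix (Fin m) (Fin m) ℂ) :
    ‖v - proj h q T v‖ ≤ ‖v - ∑ t ∈ Finset.range T, h.smul (q t) (c t)‖ := by
  have hsplit : v - ∑ t ∈ Finset.range T, h.smul (q t) (c t)
      = (v - proj h q T v)
        + ∑ t ∈ Finset.range T, h.smul (q t) (h.inner (q t) v - c t) := by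
    have : ∑ t ∈ Finset.range T, h.smul (q t) (h.inner (q t) v - c t)
        = proj h q T v - ∑ t ∈ Finset.range T, h.smul (q t) (c t) := by
      rw [proj, ← Finset.sum_sub_distrib]
      exact Finset.sum_congr rfl fun t _ => h.smul_sub_alg _ _ _
    rw [this]; abel
  rw [hsplit]
  apply h.norm_le_norm_add_of_inner_eq_zero
  have h0 := inner_span_orth h q (Finset.range T)
    (fun t => h.inner (q t) v - c t) (v - proj h q T v)
    (fun t ht => inner_q_proj h q horth hnorm v T t (Finset.mem_range.mp ht))
  rw [h.inner_conj, h0, star_zero]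

lemma proj_norm_le (horth : ∀ s t, s ≠ t → h.inner (q s) (q t) = 0)
    (hnorm : ∀ t, q t = 0 ∨ h.Normalized (q t)) (v : M) (T : ℕ) : ‖proj h q T v‖ ≤ ‖v‖ := by
  have h0 : h.inner (proj h q T v) (v - proj h q T v) = 0 :=
    inner_span_orth h q (Finset.range T) _ _
      (fun t ht => inner_q_proj h q horth hnorm v T t (Finset.mem_range.mp ht))
  have h1 := h.norm_le_norm_add_of_inner_eq_zero _ _ h0
  rwa [add_sub_cancel] at h1

lemma proj_sub (T : ℕ) (u v : M) :
    proj h q T (u - v) = proj h q T u - proj h q T v := by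
  rw [proj, proj, proj, ← Finset.sum_sub_distrib]
  exact Finset.sum_congr rfl fun t _ => by
    rw [h.inner_sub_right, h.smul_sub_alg]

end HilbertModuleMat

open HilbertModuleMat

/-- Strong convergence of the compressed Perron–Frobenius operator: if `k̃` is continuous,
the orbit `{x_t}` is dense in `X^m`, the feature map `φ` is continuous with dense
`ℂ^{m×m}`-linear span (the RKHM property), `{q_t}` is the exact (`ε = 0`) Gram–Schmidt
orthonormal system built from `{φ(x_t)}`, and `K` is a bounded `ℂ^{m×m}`-linear operator,
then `{q_t}` is an orthonormal basis and `Q_T Q_T* K Q_T Q_T* → K` strongly. -/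
theorem compression_strong_convergence
    {m : ℕ} {X : Type*} [TopologicalSpace X]
    {M : Type*} [NormedAddCommGroup M] [CompleteSpace M]
    (h : HilbertModuleMat m M)
    (ktilde : X → X → ℂ) (hk : Continuous fun p : X × X => ktilde p.1 p.2)
    (φ : (Fin m → X) → M) (hφcont : Continuous φ)
    (hφk : ∀ x y : Fin m → X,
      h.inner (φ x) (φ y) = Matrix.of fun i j => ktilde (x i) (y j))
    (hφdense : Dense {v : M | ∃ (n : ℕ) (y : Fin n → (Fin m → X))
        (c : Fin n → Matrix (Fin m) (Fin m) ℂ), v = ∑ t, h.smul (φ (y t)) (c t)})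
    (x : ℕ → (Fin m → X)) (hxdense : Dense (Set.range x))
    (q : ℕ → M)
    (horth : ∀ s t, s ≠ t → h.inner (q s) (q t) = 0)
    (hnorm : ∀ t, q t = 0 ∨ h.Normalized (q t))
    (hqspan : ∀ t : ℕ, ∃ c : Fin (t + 1) → Matrix (Fin m) (Fin m) ℂ,
      q t = ∑ s : Fin (t + 1), h.smul (φ (x s.val)) (c s))
    (hwspan : ∀ t : ℕ, ∃ c : Fin (t + 1) → Matrix (Fin m) (Fin m) ℂ,
      φ (x t) = ∑ s : Fin (t + 1), h.smul (q s.val) (c s))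
    (K : M → M)
    (Kadd : ∀ u v, K (u + v) = K u + K v)
    (Ksmul : ∀ u c, K (h.smul u c) = h.smul (K u) c)
    (C : ℝ) (Kbound : ∀ u, ‖K u‖ ≤ C * ‖u‖) :
    Dense {v : M | ∃ (s : Finset ℕ) (c : ℕ → Matrix (Fin m) (Fin m) ℂ),
      v = ∑ t ∈ s, h.smul (q t) (c t)} ∧
    ∀ v : M, Filter.Tendsto
      (fun T : ℕ => ‖K v -
        ∑ t ∈ Finset.range T, h.smul (q t) (h.inner (q t)
          (K (∑ s ∈ Finset.range T, h.smul (q s) (h.inner (q s) v))))‖)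
      Filter.atTop (nhds 0) := by
  classical
  set S : Set M := {v : M | ∃ (s : Finset ℕ) (c : ℕ → Matrix (Fin m) (Fin m) ℂ),
      v = ∑ t ∈ s, h.smul (q t) (c t)} with hSdef
  -- extension of a span combination to a larger index range
  have hextend : ∀ (s : Finset ℕ) (c : ℕ → Matrix (Fin m) (Fin m) ℂ) (N : ℕ),
      s ⊆ Finset.range N →
      ∑ t ∈ s, h.smul (q t) (c t)
        = ∑ t ∈ Finset.range N, h.smul (q t) (if t ∈ s then c t else 0) := by
    intro s c N hsub
    have h1 : ∑ t ∈ s, h.smul (q t) (c t)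
        = ∑ t ∈ s, h.smul (q t) (if t ∈ s then c t else 0) :=
      Finset.sum_congr rfl fun t ht => by rw [if_pos ht]
    rw [h1]
    exact Finset.sum_subset hsub fun t _ hts => by rw [if_neg hts, h.smul_zero']
  have hS0 : (0 : M) ∈ S := ⟨∅, 0, by simp⟩
  have hSadd : ∀ u v, u ∈ S → v ∈ S → u + v ∈ S := by
    rintro u v ⟨s1, c1, rfl⟩ ⟨s2, c2, rfl⟩
    obtain ⟨N1, hN1⟩ := s1.exists_nat_subset_range
    obtain ⟨N2, hN2⟩ := s2.exists_nat_subset_range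
    have h1 : s1 ⊆ Finset.range (max N1 N2) :=
      hN1.trans (Finset.range_subset_range.mpr (le_max_left _ _))
    have h2 : s2 ⊆ Finset.range (max N1 N2) :=
      hN2.trans (Finset.range_subset_range.mpr (le_max_right _ _))
    refine ⟨Finset.range (max N1 N2),
      fun t => (if t ∈ s1 then c1 t else 0) + (if t ∈ s2 then c2 t else 0), ?_⟩
    rw [hextend s1 c1 _ h1, hextend s2 c2 _ h2, ← Finset.sum_add_distrib]
    exact Finset.sum_congr rfl fun t _ => (h.smul_add_alg _ _ _).symm
  have hSsmul : ∀ v (c : Matrix (Fin m) (Fin m) ℂ), v ∈ S → h.smul v c ∈ S := by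
    rintro v c ⟨s, cs, rfl⟩
    refine ⟨s, fun t => cs t * c, ?_⟩
    rw [h.smul_sum]
    exact Finset.sum_congr rfl fun t _ => (h.smul_mul _ _ _).symm
  have hSsum : ∀ {ι : Type} (s : Finset ι) (f : ι → M),
      (∀ i ∈ s, f i ∈ S) → (∑ i ∈ s, f i) ∈ S := by
    intro ι s f hf
    induction s using Finset.induction_on with
    | empty => simpa using hS0
    | @insert a s ha ih =>
        rw [Finset.sum_insert ha]
        exact hSadd _ _ (hf a (Finset.mem_insert_self a s))
          (ih fun i hi => hf i (Finset.mem_insert_of_mem hi))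
  have hSphi : ∀ t, φ (x t) ∈ S := by
    intro t
    obtain ⟨c, hc⟩ := hwspan t
    refine ⟨Finset.range (t + 1),
      fun i => if hi : i < t + 1 then c ⟨i, hi⟩ else 0, ?_⟩
    rw [hc, ← Fin.sum_univ_eq_sum_range
      (fun i => h.smul (q i) (if hi : i < t + 1 then c ⟨i, hi⟩ else 0)) (t + 1)]
    exact Finset.sum_congr rfl fun i _ => by rw [dif_pos i.isLt]
  -- density of the span of the orthonormal system
  have hSdense : Dense S := by
    rw [Metric.dense_iff]
    intro u r hr
    obtain ⟨v, hvD, hv⟩ := Metric.mem_closure_iff.mp (hφdense u) (r / 2) (by positivity)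
    obtain ⟨n, y, c, rfl⟩ := hvD
    set B : ℝ := (∑ t : Fin n, ‖c t‖) + 1 with hB
    have hBpos : 0 < B := by positivity
    set δ : ℝ := (r / 2) / B with hδdef
    have hδ : 0 < δ := by positivity
    have hchoice : ∀ t : Fin n, ∃ j : ℕ, ‖φ (y t) - φ (x j)‖ < δ := by
      intro t
      have hycl : y t ∈ closure (Set.range x) := hxdense _
      have hopen : IsOpen (φ ⁻¹' Metric.ball (φ (y t)) δ) :=
        hφcont.isOpen_preimage _ Metric.isOpen_ball
      have hmem : y t ∈ φ ⁻¹' Metric.ball (φ (y t)) δ := by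
        simp [Metric.mem_ball, hδ]
      obtain ⟨z, hz1, j, rfl⟩ := _root_.mem_closure_iff.mp hycl _ hopen hmem
      refine ⟨j, ?_⟩
      rw [Set.mem_preimage, Metric.mem_ball, dist_comm, dist_eq_norm] at hz1
      exact hz1
    choose j hj using hchoice
    refine ⟨∑ t : Fin n, h.smul (φ (x (j t))) (c t), ?_, ?_⟩
    · rw [Metric.mem_ball]
      have hdiff : ‖(∑ t : Fin n, h.smul (φ (y t)) (c t))
          - ∑ t : Fin n, h.smul (φ (x (j t))) (c t)‖ ≤ δ * (∑ t : Fin n, ‖c t‖) := by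
        rw [← Finset.sum_sub_distrib]
        calc ‖∑ t : Fin n, (h.smul (φ (y t)) (c t) - h.smul (φ (x (j t))) (c t))‖
            ≤ ∑ t : Fin n, ‖h.smul (φ (y t)) (c t) - h.smul (φ (x (j t))) (c t)‖ :=
              norm_sum_le _ _
          _ ≤ ∑ t : Fin n, δ * ‖c t‖ := by
              refine Finset.sum_le_sum fun t _ => ?_
              rw [← h.smul_sub_vec]
              calc ‖h.smul (φ (y t) - φ (x (j t))) (c t)‖
                  ≤ ‖φ (y t) - φ (x (j t))‖ * ‖c t‖ := h.norm_smul_le _ _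
                _ ≤ δ * ‖c t‖ :=
                    mul_le_mul_of_nonneg_right (hj t).le (norm_nonneg _)
          _ = δ * (∑ t : Fin n, ‖c t‖) := by rw [Finset.mul_sum]
      have hd2 : δ * (∑ t : Fin n, ‖c t‖) < r / 2 := by
        have hlt : (∑ t : Fin n, ‖c t‖) < B := by rw [hB]; linarith
        calc δ * (∑ t : Fin n, ‖c t‖) < δ * B := by
              exact mul_lt_mul_of_pos_left hlt hδ
          _ = r / 2 := by
              rw [hδdef]; field_simp
      calc dist (∑ t : Fin n, h.smul (φ (x (j t))) (c t)) u
          ≤ dist (∑ t : Fin n, h.smul (φ (x (j t))) (c t))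
              (∑ t : Fin n, h.smul (φ (y t)) (c t))
            + dist (∑ t : Fin n, h.smul (φ (y t)) (c t)) u := dist_triangle _ _ _
        _ < r / 2 + r / 2 := by
            refine add_lt_add_of_le_of_lt ?_ ?_
            · rw [dist_eq_norm, norm_sub_rev]
              exact hdiff.trans_lt hd2 |>.le
            · rw [dist_comm]; exact hv
        _ = r := by ring
    · exact hSsum Finset.univ _ fun t _ => hSsmul _ _ (hSphi (j t))
  -- convergence of the projections
  have hconv : ∀ v : M, Filter.Tendsto (fun T : ℕ => ‖v - proj h q T v‖)
      Filter.atTop (nhds 0) := by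
    intro v
    rw [Metric.tendsto_atTop]
    intro ε hε
    obtain ⟨w, hwS, hw⟩ := Metric.mem_closure_iff.mp (hSdense v) ε hε
    obtain ⟨s, c, rfl⟩ := hwS
    obtain ⟨N, hN⟩ := s.exists_nat_subset_range
    refine ⟨N, fun T hT => ?_⟩
    have hsub : s ⊆ Finset.range T := hN.trans (Finset.range_subset_range.mpr hT)
    rw [Real.dist_eq, sub_zero, abs_of_nonneg (norm_nonneg _)]
    calc ‖v - proj h q T v‖
        ≤ ‖v - ∑ t ∈ Finset.range T, h.smul (q t) (if t ∈ s then c t else 0)‖ :=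
          bestapprox h q horth hnorm v T _
      _ = dist v (∑ t ∈ s, h.smul (q t) (c t)) := by
          rw [← hextend s c T hsub, dist_eq_norm]
      _ < ε := hw
  refine ⟨hSdense, fun v => ?_⟩
  have hK0 : K 0 = 0 := by
    have h0 := Kadd 0 0
    rw [add_zero] at h0
    exact (left_eq_add.mp h0)
  have hKsub : ∀ u w, K (u - w) = K u - K w := by
    intro u w
    have h1 : K (-w) = -(K w) := by
      have h0 := Kadd w (-w)
      rw [add_neg_cancel, hK0] at h0
      exact (neg_eq_of_add_eq_zero_right h0.symm).symm
    rw [sub_eq_add_neg, Kadd, h1, sub_eq_add_neg]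
  have hb : ∀ T : ℕ, ‖K v - proj h q T (K (proj h q T v))‖
      ≤ ‖K v - proj h q T (K v)‖ + C * ‖v - proj h q T v‖ := by
    intro T
    have h1 : K v - proj h q T (K (proj h q T v))
        = (K v - proj h q T (K v)) + proj h q T (K v - K (proj h q T v)) := by
      rw [proj_sub]; abel
    rw [h1]
    refine (norm_add_le _ _).trans (add_le_add le_rfl ?_)
    calc ‖proj h q T (K v - K (proj h q T v))‖
        ≤ ‖K v - K (proj h q T v)‖ := proj_norm_le h q horth hnorm _ _
      _ = ‖K (v - proj h q T v)‖ := by rw [hKsub]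
      _ ≤ C * ‖v - proj h q T v‖ := Kbound _
  have hg : Filter.Tendsto
      (fun T : ℕ => ‖K v - proj h q T (K v)‖ + C * ‖v - proj h q T v‖)
      Filter.atTop (nhds 0) := by
    have := (hconv (K v)).add ((hconv v).const_mul C)
    simpa using this
  have hfinal : Filter.Tendsto (fun T : ℕ => ‖K v - proj h q T (K (proj h q T v))‖)
      Filter.atTop (nhds 0) :=
    squeeze_zero (fun T => norm_nonneg _) hb hg
  exact hfinal
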